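/- If P₁ᵀ ⊙ P₂ᵀ = P₃ᵀ ⊗ P₄ᵀ for selection matrices, then the masked composition satisfies vec(M(𝒰X)) = Pᵀ((P₄U₂) ⊗ (P₃U₁)) vec(X) for a suitable commutation matrix P, and, whenever (P₄U₂) ⊗ (P₃U₁) is invertible, vec((M𝒰)⁻¹X) = ((P₄U₂)⁻¹ ⊗ (P₃U₁)⁻¹) P_{m₂m₁} vec(X). -/

import Mathlib

open Matrix
open scoped Kronecker

/-- Column-stacking vectorization of a matrix: `mvec X (j, i) = X i j`. -/
def mvec {m n : ℕ} (X : Matrix (Fin m) (Fin n) ℝ) : Fin n × Fin m → ℝ :=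
  fun p => X p.2 p.1

/-- Column-wise Khatri–Rao product. -/
def khatriRao {α β γ : Type*} (A : Matrix α γ ℝ) (B : Matrix β γ ℝ) :
    Matrix (α × β) γ ℝ :=
  Matrix.of fun p k => A p.1 k * B p.2 k

/-- The commutation matrix P_{mn} = Σᵢ Σⱼ E_{ij} ⊗ E_{ij}ᵀ. -/
def commMatrix (m n : ℕ) : Matrix (Fin m × Fin n) (Fin n × Fin m) ℝ :=
  ∑ i : Fin m, ∑ j : Fin n,
    (Matrix.single i j (1 : ℝ)) ⊗ₖ (Matrix.single i j (1 : ℝ))ᵀ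

lemma commMatrix_apply (m n : ℕ) (a : Fin m) (b : Fin n) (c : Fin n) (d : Fin m) :
    commMatrix m n (a, b) (c, d) = if c = b ∧ d = a then 1 else 0 := by
  unfold commMatrix
  simp [Matrix.sum_apply, Matrix.single, ite_and]
  aesop

lemma commMatrix_mulVec (m n : ℕ) (v : Fin n × Fin m → ℝ) :
    commMatrix m n *ᵥ v = fun p => v (p.2, p.1) := by
  funext ⟨a, b⟩
  simp only [Matrix.mulVec, dotProduct]
  rw [Fintype.sum_prod_type]
  simp [commMatrix_apply, ite_and]

lemma commMatrix_transpose_mulVec (m n : ℕ) (v : Fin m × Fin n → ℝ) :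
    (commMatrix m n)ᵀ *ᵥ v = fun p => v (p.2, p.1) := by
  funext ⟨c, d⟩
  simp only [Matrix.mulVec, dotProduct, Matrix.transpose_apply]
  rw [Fintype.sum_prod_type]
  simp [commMatrix_apply, ite_and]

lemma sum4_swap {α β γ δ : Type*} [Fintype α] [Fintype β] [Fintype γ] [Fintype δ]
    (f : α → β → γ → δ → ℝ) :
    ∑ a, ∑ b, ∑ c, ∑ d, f a b c d = ∑ c, ∑ d, ∑ a, ∑ b, f a b c d := by
  calc ∑ a, ∑ b, ∑ c, ∑ d, f a b c d
      = ∑ a, ∑ c, ∑ b, ∑ d, f a b c d :=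
        Finset.sum_congr rfl fun a _ => Finset.sum_comm
    _ = ∑ c, ∑ a, ∑ b, ∑ d, f a b c d := Finset.sum_comm
    _ = ∑ c, ∑ a, ∑ d, ∑ b, f a b c d :=
        Finset.sum_congr rfl fun c _ => Finset.sum_congr rfl fun a _ => Finset.sum_comm
    _ = ∑ c, ∑ d, ∑ a, ∑ b, f a b c d :=
        Finset.sum_congr rfl fun c _ => Finset.sum_comm

theorem mask_kron_form_and_inverse {n₁ n₂ m₁ m₂ : ℕ}
    (U₁ : Matrix (Fin n₁) (Fin m₁) ℝ) (U₂ : Matrix (Fin n₂) (Fin m₂) ℝ)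
    (P₁ : Matrix (Fin m₁ × Fin m₂) (Fin n₁) ℝ) (P₂ : Matrix (Fin m₁ × Fin m₂) (Fin n₂) ℝ)
    (P₃ : Matrix (Fin m₁) (Fin n₁) ℝ) (P₄ : Matrix (Fin m₂) (Fin n₂) ℝ)
    (hP₁ : ∀ a, ∃ s, ∀ t, P₁ a t = if t = s then 1 else 0)
    (hP₂ : ∀ a, ∃ s, ∀ t, P₂ a t = if t = s then 1 else 0)
    (hP₃ : ∀ a, ∃ s, ∀ t, P₃ a t = if t = s then 1 else 0)
    (hP₄ : ∀ a, ∃ s, ∀ t, P₄ a t = if t = s then 1 else 0)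
    (hfac : khatriRao P₁ᵀ P₂ᵀ = P₃ᵀ ⊗ₖ P₄ᵀ) :
    (∀ X : Matrix (Fin m₁) (Fin m₂) ℝ,
      (khatriRao P₂ᵀ P₁ᵀ)ᵀ *ᵥ mvec (U₁ * X * U₂ᵀ)
        = ((commMatrix m₂ m₁)ᵀ * ((P₄ * U₂) ⊗ₖ (P₃ * U₁))) *ᵥ mvec X) ∧
    (IsUnit ((P₄ * U₂) ⊗ₖ (P₃ * U₁)) →
      ∀ X Y : Matrix (Fin m₁) (Fin m₂) ℝ,
        (Matrix.of fun i j =>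
            ((khatriRao P₂ᵀ P₁ᵀ)ᵀ *ᵥ mvec (U₁ * Y * U₂ᵀ)) (i, j)) = X →
          mvec Y = ((((P₄ * U₂)⁻¹ ⊗ₖ (P₃ * U₁)⁻¹) * commMatrix m₂ m₁) *ᵥ
            fun p => X p.1 p.2)) := by
  have hfac' : ∀ (i : Fin m₁) (j : Fin m₂) a b,
      P₁ (i, j) a * P₂ (i, j) b = P₃ i a * P₄ j b := by
    intro i j a b
    have := congrFun (congrFun hfac (a, b)) (i, j)
    simpa [khatriRao] using this
  have part1 : ∀ X : Matrix (Fin m₁) (Fin m₂) ℝ,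
      (khatriRao P₂ᵀ P₁ᵀ)ᵀ *ᵥ mvec (U₁ * X * U₂ᵀ)
        = ((commMatrix m₂ m₁)ᵀ * ((P₄ * U₂) ⊗ₖ (P₃ * U₁))) *ᵥ mvec X := by
    intro X
    rw [← Matrix.mulVec_mulVec, commMatrix_transpose_mulVec]
    funext ⟨i, j⟩
    show ∑ q : Fin n₂ × Fin n₁, (khatriRao P₂ᵀ P₁ᵀ)ᵀ (i, j) q * mvec (U₁ * X * U₂ᵀ) q
      = ∑ q : Fin m₂ × Fin m₁, ((P₄ * U₂) ⊗ₖ (P₃ * U₁)) (j, i) q * mvec X q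
    rw [Fintype.sum_prod_type]
    conv_rhs => rw [Fintype.sum_prod_type]
    simp only [khatriRao, Matrix.transpose_apply, Matrix.of_apply, mvec,
      Matrix.kroneckerMap_apply, Matrix.mul_apply]
    have key : ∀ d c, (∑ b, P₄ j b * U₂ b d) * (∑ a, P₃ i a * U₁ a c) * X c d
        = ∑ b, ∑ a, P₄ j b * U₂ b d * (P₃ i a * U₁ a c) * X c d := by
      intro d c
      simp only [Finset.sum_mul, Finset.mul_sum]
      rw [Finset.sum_comm]
    simp only [key]
    rw [sum4_swap (fun d c b a => P₄ j b * U₂ b d * (P₃ i a * U₁ a c) * X c d)]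
    refine Finset.sum_congr rfl fun b _ => Finset.sum_congr rfl fun a _ => ?_
    simp only [Matrix.mul_apply, Matrix.transpose_apply, Finset.mul_sum, Finset.sum_mul]
    refine Finset.sum_congr rfl fun d _ => Finset.sum_congr rfl fun c _ => ?_
    linear_combination (U₁ a c * X c d * U₂ b d) * hfac' i j a b
  refine ⟨part1, ?_⟩
  intro hK X Y hXY
  set K := (P₄ * U₂) ⊗ₖ (P₃ * U₁) with hKdef
  have hv : (fun p : Fin m₁ × Fin m₂ => X p.1 p.2)
      = ((commMatrix m₂ m₁)ᵀ * K) *ᵥ mvec Y := by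
    funext ⟨i, j⟩
    rw [← hXY]
    rw [part1 Y]
    rfl
  rw [← Matrix.mulVec_mulVec, hv, ← Matrix.mulVec_mulVec, commMatrix_transpose_mulVec,
    commMatrix_mulVec]
  have : (fun p : Fin m₂ × Fin m₁ => (fun q : Fin m₁ × Fin m₂ =>
      (K *ᵥ mvec Y) (q.2, q.1)) (p.2, p.1)) = K *ᵥ mvec Y := rfl
  rw [this, Matrix.mulVec_mulVec, ← Matrix.inv_kronecker, ← hKdef,
    Matrix.nonsing_inv_mul K (Matrix.isUnit_iff_isUnit_det K |>.mp hK), Matrix.one_mulVec]
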